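/- Let a_1, a_2 be units in ℤ_p, let d be a positive integer with d ≡ a_1 a_2 (mod m_p), where m_p = p for odd p and m_2 = 8, and suppose −d is not a square in ℚ_p. Then the binary quadratic form a_1 X_1² + a_2 X_2² is isotropic over the field ℚ_p(√−d). -/

import Mathlib

open Polynomial

lemma sqrt_aux (p : ℕ) [hp : Fact p.Prime] (a₁ a₂ : ℤ_[p])
    (h₁ : IsUnit a₁) (h₂ : IsUnit a₂) (d : ℕ)
    (hcong : (((if p = 2 then 8 else p : ℕ)) : ℤ_[p]) ∣ ((d : ℤ_[p]) - a₁ * a₂)) :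
    ∃ z : ℤ_[p], z ^ 2 = a₁ * a₂ * d := by
  set c : ℤ_[p] := a₁ * a₂ * d with hc
  set a : ℤ_[p] := a₁ * a₂ with ha
  set F : Polynomial ℤ_[p] := X ^ 2 - C c with hF
  have hderiv : F.derivative.eval a = 2 * a := by
    simp [hF, derivative_pow]
  have heval : F.eval a = a * (a - d) := by
    simp [hF, hc]; ring
  have hna : ‖a‖ = 1 := PadicInt.isUnit_iff.mp (h₁.mul h₂)
  clear_value F
  clear_value c
  clear_value a
  -- norm bound on a - d
  obtain ⟨k, hk⟩ := hcong
  have hdiff : a - (d : ℤ_[p]) = -(((if p = 2 then 8 else p : ℕ) : ℤ_[p]) * k) := by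
    rw [← hk]; ring
  have hkle : ‖a - (d : ℤ_[p])‖ ≤ ‖(((if p = 2 then 8 else p : ℕ) : ℤ_[p]))‖ := by
    rw [hdiff, norm_neg, norm_mul _ _]
    exact mul_le_of_le_one_right (norm_nonneg _) (PadicInt.norm_le_one k)
  have hnorm : ‖F.eval a‖ < ‖F.derivative.eval a‖ ^ 2 := by
    rw [heval, hderiv, norm_mul _ _, norm_mul _ _, hna, one_mul, mul_one]
    by_cases hp2 : p = 2
    · subst hp2
      rw [if_pos rfl] at hkle
      have h2n : ‖(2 : ℤ_[2])‖ = (2 : ℝ)⁻¹ := by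
        simpa using PadicInt.norm_p (p := 2)
      have hkle' : ‖a - ((d : ℕ) : ℤ_[2])‖ ≤ ‖(2 : ℤ_[2])‖ ^ 3 := by
        refine le_trans hkle (le_of_eq ?_)
        rw [show ((8 : ℕ) : ℤ_[2]) = (2 : ℤ_[2]) ^ 3 by norm_num, norm_pow]
      calc ‖a - ((d : ℕ) : ℤ_[2])‖ ≤ ‖(2 : ℤ_[2])‖ ^ 3 := hkle'
        _ < ‖(2 : ℤ_[2])‖ ^ 2 := by rw [h2n]; norm_num
    · have h2u : IsUnit (2 : ℤ_[p]) := by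
        rw [PadicInt.isUnit_iff]
        have hnd : ¬ ((p : ℤ) ∣ (2 : ℤ)) := by
          intro h
          rw [show (2 : ℤ) = ((2 : ℕ) : ℤ) by norm_num, Int.natCast_dvd_natCast] at h
          exact hp2 ((Nat.prime_dvd_prime_iff_eq hp.out Nat.prime_two).mp h)
        have hlt := (PadicInt.norm_int_lt_one_iff_dvd (p := p) 2).not.mpr hnd
        have hle : ‖((2 : ℤ) : ℤ_[p])‖ ≤ 1 := PadicInt.norm_le_one _
        push_neg at hlt
        have h1 : ‖((2 : ℤ) : ℤ_[p])‖ = 1 := le_antisymm hle hlt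
        simp at h1; exact h1
      rw [PadicInt.isUnit_iff.mp h2u, one_pow]
      rw [if_neg hp2] at hkle
      calc ‖a - (d : ℤ_[p])‖ ≤ ‖((p : ℕ) : ℤ_[p])‖ := hkle
        _ = (p : ℝ)⁻¹ := by simpa using PadicInt.norm_p (p := p)
        _ < 1 := by
            rw [inv_lt_one_iff₀]
            right
            exact_mod_cast hp.out.one_lt
  obtain ⟨z, hz, -⟩ := hensels_lemma hnorm
  refine ⟨z, ?_⟩
  have : z ^ 2 - c = 0 := by simpa [hF] using hz
  exact sub_eq_zero.mp this

/-- Let `a₁, a₂` be units of `ℤ_p`, let `d ∈ ℕ`, `d > 0`, with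
`d ≡ a₁a₂ (mod m_p)` where `m_p = p` for odd `p` and `m_2 = 8`, and suppose `−d`
is not a square in `ℚ_p`.  Then `a₁X₁² + a₂X₂²` is isotropic over `ℚ_p(√−d)`
(formalized: over any field `L ⊇ ℚ_p` containing a square root of `−d`). -/
theorem stmt12 (p : ℕ) [Fact p.Prime] (a₁ a₂ : ℤ_[p])
    (h₁ : IsUnit a₁) (h₂ : IsUnit a₂) (d : ℕ) (hd : 0 < d)
    (hcong : (((if p = 2 then 8 else p : ℕ)) : ℤ_[p]) ∣ ((d : ℤ_[p]) - a₁ * a₂))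
    (hns : ¬ IsSquare (-(d : ℚ_[p])))
    (L : Type*) [Field L] [Algebra ℚ_[p] L] (s : L) (hs : s ^ 2 = -(d : L)) :
    ∃ x y : L, ¬ (x = 0 ∧ y = 0) ∧
      algebraMap ℚ_[p] L (a₁ : ℚ_[p]) * x ^ 2 +
        algebraMap ℚ_[p] L (a₂ : ℚ_[p]) * y ^ 2 = 0 := by
  obtain ⟨z, hz⟩ := sqrt_aux p a₁ a₂ h₁ h₂ d hcong
  have hz' : ((z : ℚ_[p])) ^ 2 = (a₁ : ℚ_[p]) * (a₂ : ℚ_[p]) * (d : ℚ_[p]) := by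
    exact_mod_cast congrArg (fun t : ℤ_[p] => (t : ℚ_[p])) hz
  refine ⟨algebraMap ℚ_[p] L (a₂ : ℚ_[p]) * s, algebraMap ℚ_[p] L (z : ℚ_[p]), ?_, ?_⟩
  · rintro ⟨-, hy0⟩
    have hzq : (z : ℚ_[p]) = 0 := (algebraMap ℚ_[p] L).injective (by simpa using hy0)
    have hzz : z = 0 := PadicInt.coe_eq_zero.mp hzq
    rw [hzz] at hz
    have hne : a₁ * a₂ * (d : ℤ_[p]) ≠ 0 := by
      refine mul_ne_zero (mul_ne_zero h₁.ne_zero h₂.ne_zero) ?_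
      exact_mod_cast hd.ne'
    exact hne (by simpa using hz.symm)
  · have hmap : (algebraMap ℚ_[p] L (z : ℚ_[p])) ^ 2 =
        algebraMap ℚ_[p] L (a₁ : ℚ_[p]) * algebraMap ℚ_[p] L (a₂ : ℚ_[p]) * (d : L) := by
      rw [← map_pow, hz', map_mul, map_mul, map_natCast]
    rw [mul_pow, hmap, hs]
    ring
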